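/- Let K be a field equipped with a nonarchimedean (rank-one) multiplicative absolute value ‖·‖ : K → ℝ≥0 which is complete for the induced metric, and let L ⊆ K be a subfield which is algebraically closed (as an abstract field). Then the topological closure of L in K is again an algebraically closed subfield of K. -/

import Mathlib

open Polynomial

theorem aux_root_step {K : Type*} [NormedField K]
    (hna : IsNonarchimedean (norm : K → ℝ)) (L : Subfield K) (hL : IsAlgClosed L)
    (q : K[X]) (hq : q.Monic) (hn : 1 ≤ q.natDegree)
    (hcoeff : ∀ i, q.coeff i ∈ closure (L : Set K))
    {D : ℝ} (hD : 1 ≤ D)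
    {ε : ℝ} (hε : 0 < ε) (hε1 : ε ≤ 1)
    {x : K} (hx : ‖x‖ ≤ D) (hqx : ‖q.eval x‖ ≤ D) :
    ∃ y : K, y ∈ L ∧ ‖y‖ ≤ D ∧ ‖x - y‖ ^ q.natDegree ≤ max ‖q.eval x‖ ε ∧
      ‖q.eval y‖ ≤ ε := by
  classical
  haveI := hL
  haveI : IsUltrametricDist K := IsUltrametricDist.isUltrametricDist_of_isNonarchimedean_norm hna
  set n := q.natDegree with hn_def
  have hn0 : n ≠ 0 := Nat.one_le_iff_ne_zero.mp hn
  have hD0 : (0:ℝ) < D := lt_of_lt_of_le one_pos hD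
  have hDn : (0:ℝ) < D ^ n := pow_pos hD0 n
  set δ : ℝ := ε / D ^ n with hδ_def
  have hδ : 0 < δ := div_pos hε hDn
  -- choose approximating coefficients in L
  have hchoice : ∀ i : ℕ, ∃ c : L, ‖q.coeff i - (c : K)‖ < δ := by
    intro i
    have h2 := hcoeff i
    rw [Metric.mem_closure_iff] at h2
    obtain ⟨c, hcL, hc⟩ := h2 δ hδ
    exact ⟨⟨c, hcL⟩, by rwa [← dist_eq_norm]⟩
  choose b hb using hchoice
  -- the approximating polynomial over L
  set s : L[X] := X ^ n + ∑ i ∈ Finset.range n, C (b i) * X ^ i with hs_def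
  have hlowdeg : (∑ i ∈ Finset.range n, (C (b i) * X ^ i : L[X])).degree < (n : WithBot ℕ) := by
    apply lt_of_le_of_lt (Polynomial.degree_sum_le _ _)
    rw [Finset.sup_lt_iff (by exact_mod_cast WithBot.bot_lt_coe n)]
    intro i hi
    exact lt_of_le_of_lt (degree_C_mul_X_pow_le _ _) (by exact_mod_cast Finset.mem_range.mp hi)
  have hs_monic : s.Monic := monic_X_pow_add hlowdeg
  have hs_deg : s.degree = n := by
    rw [hs_def, degree_add_eq_left_of_degree_lt (by rwa [degree_X_pow]), degree_X_pow]
  have hs_natDeg : s.natDegree = n := natDegree_eq_of_degree_eq_some hs_deg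
  set r : K[X] := s.map L.subtype with hr_def
  have hr_monic : r.Monic := hs_monic.map _
  have hr_natDeg : r.natDegree = n := by
    rw [hr_def, hs_monic.natDegree_map, hs_natDeg]
  -- coefficients of s below n
  have hs_coeff : ∀ i < n, s.coeff i = b i := by
    intro i hi
    rw [hs_def]
    rw [coeff_add, coeff_X_pow, if_neg (Nat.ne_of_lt hi), zero_add, finset_sum_coeff]
    rw [Finset.sum_eq_single i]
    · simp
    · intro j hj hne
      rw [coeff_C_mul, coeff_X_pow, if_neg (fun h => hne h.symm), mul_zero]
    · intro hcon
      exact absurd (Finset.mem_range.mpr hi) hcon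
  -- difference evaluation estimate
  have hdiff : ∀ z : K, ‖z‖ ≤ D → ‖q.eval z - r.eval z‖ ≤ ε := by
    intro z hz
    have hz0 : 0 ≤ ‖z‖ := norm_nonneg z
    have hcoeff_diff : ∀ i < n, (q - r).coeff i = q.coeff i - (b i : K) := by
      intro i hi
      rw [coeff_sub, hr_def, coeff_map, hs_coeff i hi]
      rfl
    have hcoeff_hi : ∀ i, n ≤ i → (q - r).coeff i = 0 := by
      intro i hi
      rcases eq_or_lt_of_le hi with h | h
      · have h1 : q.coeff i = 1 := by rw [← h]; exact hq.coeff_natDegree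
        have h2 : r.coeff i = 1 := by rw [← h, ← hr_natDeg]; exact hr_monic.coeff_natDegree
        rw [coeff_sub, h1, h2, sub_self]
      · rw [coeff_sub, coeff_eq_zero_of_natDegree_lt (by omega),
          coeff_eq_zero_of_natDegree_lt (by omega), sub_self]
    have hqr_deg : (q - r).natDegree < n := by
      rcases eq_or_ne (q - r) 0 with h | h
      · rw [h, natDegree_zero]; omega
      · rw [natDegree_lt_iff_degree_lt h, degree_lt_iff_coeff_zero]
        intro m hm
        exact hcoeff_hi m (by exact_mod_cast hm)
    have heval : (q - r).eval z = ∑ i ∈ Finset.range n, (q - r).coeff i * z ^ i :=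
      eval_eq_sum_range' hqr_deg z
    obtain ⟨i, hi_mem, hi_le⟩ := IsUltrametricDist.exists_norm_finset_sum_le
      (Finset.range n) (fun i => (q - r).coeff i * z ^ i)
    have hi_lt : i < n := Finset.mem_range.mp (hi_mem ⟨0, Finset.mem_range.mpr (by omega)⟩)
    have : ‖(q - r).eval z‖ ≤ ‖(q - r).coeff i * z ^ i‖ := by rwa [heval]
    rw [eval_sub] at this
    refine le_trans this ?_
    rw [norm_mul, norm_pow, hcoeff_diff i hi_lt]
    have h1 : ‖q.coeff i - (b i : K)‖ ≤ δ := le_of_lt (hb i)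
    have h2 : ‖z‖ ^ i ≤ D ^ n :=
      le_trans (pow_le_pow_left₀ hz0 hz i) (pow_le_pow_right₀ hD (le_of_lt hi_lt))
    calc ‖q.coeff i - (b i : K)‖ * ‖z‖ ^ i ≤ δ * D ^ n :=
          mul_le_mul h1 h2 (pow_nonneg hz0 i) (le_of_lt hδ)
      _ = ε := by rw [hδ_def, div_mul_cancel₀ _ (ne_of_gt hDn)]
  -- r splits over K with roots in L
  have hs_splits : Splits s := IsAlgClosed.splits s
  have hr_splits : Splits r := by
    rw [hr_def]
    exact hs_splits.map _
  have hroots_card : r.roots.card = n := by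
    rw [splits_iff_card_roots.mp hr_splits, hr_natDeg]
  have hroots_mem : ∀ z ∈ r.roots, z ∈ L := by
    intro z hz
    rw [hr_def, hs_splits.roots_map, Multiset.mem_map] at hz
    obtain ⟨w, _, rfl⟩ := hz
    exact w.2
  -- pick the closest root
  have hroots_ne : r.roots.toFinset.Nonempty := by
    rw [Multiset.toFinset_nonempty, ← Multiset.card_pos, hroots_card]
    omega
  obtain ⟨y, hy_mem, hy_min⟩ := Finset.exists_min_image r.roots.toFinset (fun z => ‖x - z‖₊)
    hroots_ne
  rw [Multiset.mem_toFinset] at hy_mem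
  -- ‖x - y‖ ^ n ≤ ‖r.eval x‖
  have hprod : ‖r.eval x‖₊ = (r.roots.map fun z => ‖x - z‖₊).prod := by
    conv_lhs => rw [hr_splits.eq_prod_roots_of_monic hr_monic]
    rw [eval_multiset_prod, Multiset.map_map]
    have h0 := map_multiset_prod (nnnormHom : K →*₀ NNReal)
      (Multiset.map ((eval x) ∘ fun a => X - C a) r.roots)
    simp only [nnnormHom_apply] at h0
    rw [h0, Multiset.map_map]
    congr 1
    apply Multiset.map_congr rfl
    intro z _
    simp
  have hmin : ‖x - y‖₊ ^ n ≤ ‖r.eval x‖₊ := by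
    rw [hprod, ← hroots_card, ← Multiset.card_map (fun z => ‖x - z‖₊)]
    apply Multiset.pow_card_le_prod
    intro w hw
    obtain ⟨z, hz, rfl⟩ := Multiset.mem_map.mp hw
    exact hy_min z (Multiset.mem_toFinset.mpr hz)
  have hmin' : ‖x - y‖ ^ n ≤ ‖r.eval x‖ := by exact_mod_cast hmin
  -- ‖r.eval x‖ ≤ max ‖q.eval x‖ ε
  have hrx : ‖r.eval x‖ ≤ max ‖q.eval x‖ ε := by
    have h2 := hna (eval x q) (-(eval x q - eval x r))
    rw [norm_neg] at h2
    have h3 : eval x q + -(eval x q - eval x r) = eval x r := by ring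
    rw [h3] at h2
    exact le_trans h2 (max_le_max le_rfl (hdiff x hx))
  have hkey : ‖x - y‖ ^ n ≤ max ‖q.eval x‖ ε := le_trans hmin' hrx
  -- ‖x - y‖ ≤ D
  have hxyD : ‖x - y‖ ≤ D := by
    have h1 : ‖x - y‖ ^ n ≤ D ^ n := by
      refine le_trans hkey (le_trans (max_le hqx (le_trans hε1 hD)) (le_self_pow₀ hD hn0))
    exact (pow_le_pow_iff_left₀ (norm_nonneg _) (le_of_lt hD0) hn0).mp h1
  have hyD : ‖y‖ ≤ D := by
    have h2 := hna x (-(x - y))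
    rw [norm_neg] at h2
    have h3 : x + -(x - y) = y := by ring
    rw [h3] at h2
    exact le_trans h2 (max_le hx hxyD)
  -- q.eval y is small
  have hry : r.eval y = 0 := by
    have := isRoot_of_mem_roots hy_mem
    exact this
  have hqy : ‖q.eval y‖ ≤ ε := by
    have : q.eval y = q.eval y - r.eval y := by rw [hry, sub_zero]
    rw [this]
    exact hdiff y hyD
  exact ⟨y, hroots_mem y hy_mem, hyD, hkey, hqy⟩

/-- Let `K` be a field with a nonarchimedean (rank-one) multiplicative absolute
value, complete for the induced metric (formalized as a complete `NormedField`
whose norm is nonarchimedean), and let `L ⊆ K` be a subfield which is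
algebraically closed as an abstract field.  Then the topological closure of `L`
in `K` is again an algebraically closed subfield of `K`. -/
theorem isAlgClosed_topologicalClosure_of_isAlgClosed_subfield
    (K : Type*) [NormedField K] [CompleteSpace K]
    (hna : IsNonarchimedean (norm : K → ℝ))
    (L : Subfield K) (hL : IsAlgClosed L) :
    IsAlgClosed L.topologicalClosure := by
  set M := L.topologicalClosure with hM
  apply IsAlgClosed.of_exists_root
  intro p hp_monic hp_irr
  set q : K[X] := p.map M.subtype with hq_def
  have hq_monic : q.Monic := hp_monic.map _
  have hn : 1 ≤ q.natDegree := by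
    rw [hq_def, hp_monic.natDegree_map]
    exact hp_irr.natDegree_pos
  set n := q.natDegree with hn_def
  have hcoeff : ∀ i, q.coeff i ∈ closure (L : Set K) := by
    intro i
    rw [hq_def, coeff_map]
    exact (p.coeff i).2
  set D : ℝ := max 1 ‖q.eval 0‖ with hD_def
  have hD : 1 ≤ D := le_max_left _ _
  have hD0 : (0:ℝ) < D := lt_of_lt_of_le one_pos hD
  have hhalf : (0:ℝ) < 2⁻¹ := by norm_num
  have hhalf1 : (2:ℝ)⁻¹ ≤ 1 := by norm_num
  set Good : ℕ → K → Prop :=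
    fun k v => ‖v‖ ≤ D ∧ ‖q.eval v‖ ≤ (if k = 0 then D else (2:ℝ)⁻¹ ^ (n * k)) ∧
      (k = 0 ∨ v ∈ L) with hGood_def
  have step : ∀ k (v : K), Good k v → ∃ w : K, Good (k+1) w ∧ ‖v - w‖ ≤ D * (2:ℝ)⁻¹ ^ k := by
    intro k v hv
    obtain ⟨hv1, hv2, _⟩ := hv
    have hε : (0:ℝ) < (2:ℝ)⁻¹ ^ (n * (k+1)) := pow_pos hhalf _
    have hε1 : (2:ℝ)⁻¹ ^ (n * (k+1)) ≤ 1 := pow_le_one₀ (le_of_lt hhalf) hhalf1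
    have hqv : ‖q.eval v‖ ≤ D := by
      refine le_trans hv2 ?_
      by_cases hk : k = 0
      · rw [if_pos hk]
      · rw [if_neg hk]
        exact le_trans (pow_le_one₀ (le_of_lt hhalf) hhalf1) hD
    obtain ⟨y, hyL, hyD, hy_close, hy_eval⟩ :=
      aux_root_step hna L hL q hq_monic hn hcoeff hD hε hε1 hv1 hqv
    refine ⟨y, ⟨hyD, ?_, Or.inr hyL⟩, ?_⟩
    · rw [if_neg (Nat.succ_ne_zero k)]
      exact hy_eval
    · -- distance bound
      set B : ℝ := if k = 0 then D else (2:ℝ)⁻¹ ^ k with hB_def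
      have hB0 : 0 ≤ B := by
        by_cases hk : k = 0 <;> simp [hB_def, hk, le_of_lt hD0, le_of_lt (pow_pos hhalf k)]
      have hBn : max ‖q.eval v‖ ((2:ℝ)⁻¹ ^ (n * (k+1))) ≤ B ^ n := by
        by_cases hk : k = 0
        · rw [hB_def, if_pos hk]
          refine max_le (le_trans hqv (le_self_pow₀ hD (by omega))) ?_
          exact le_trans hε1 (le_trans hD (le_self_pow₀ hD (by omega)))
        · rw [hB_def, if_neg hk]
          rw [if_neg hk] at hv2
          have h2 : ((2:ℝ)⁻¹ ^ k) ^ n = (2:ℝ)⁻¹ ^ (n * k) := by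
            rw [← pow_mul, mul_comm]
          refine max_le (le_trans hv2 (le_of_eq h2.symm)) ?_
          rw [h2]
          exact pow_le_pow_of_le_one (le_of_lt hhalf) hhalf1
            (Nat.mul_le_mul_left n (by omega))
      have hvy : ‖v - y‖ ≤ B := by
        have h1 : ‖v - y‖ ^ n ≤ B ^ n := le_trans hy_close hBn
        exact (pow_le_pow_iff_left₀ (norm_nonneg _) hB0 (by omega)).mp h1
      refine le_trans hvy ?_
      by_cases hk : k = 0
      · simp [hB_def, hk]
      · rw [hB_def, if_neg hk]
        nth_rewrite 1 [← one_mul ((2:ℝ)⁻¹ ^ k)]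
        exact mul_le_mul_of_nonneg_right hD (le_of_lt (pow_pos hhalf k))
  choose! next hnext using step
  set f : ℕ → K := fun k => Nat.rec (0:K) (fun k v => next k v) k with hf_def
  have hGood : ∀ k, Good k (f k) := by
    intro k
    induction k with
    | zero =>
      refine ⟨by simp [hf_def, le_of_lt hD0], ?_, Or.inl rfl⟩
      simp only [hf_def, if_pos rfl]
      exact le_max_right _ _
    | succ k ih => exact (hnext k (f k) ih).1
  have hdist : ∀ k, dist (f k) (f (k+1)) ≤ D * (2:ℝ)⁻¹ ^ k := by
    intro k
    rw [dist_eq_norm]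
    exact (hnext k (f k) (hGood k)).2
  have hcauchy : CauchySeq f := cauchySeq_of_le_geometric 2⁻¹ D (by norm_num) hdist
  obtain ⟨ℓ, hℓ⟩ := cauchySeq_tendsto_of_complete hcauchy
  have hmem : ℓ ∈ closure (L : Set K) := by
    apply mem_closure_of_tendsto (hℓ.comp (Filter.tendsto_add_atTop_nat 1))
    filter_upwards with k
    exact ((hGood (k+1)).2.2).resolve_left (Nat.succ_ne_zero k)
  have hmemM : ℓ ∈ M := by
    have hsub : closure (L : Set K) ⊆ (M : Set K) :=
      closure_minimal (Subfield.le_topologicalClosure L) (Subfield.isClosed_topologicalClosure L)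
    exact hsub hmem
  have heval : q.eval ℓ = 0 := by
    have hcont : Filter.Tendsto (fun k => q.eval (f k)) Filter.atTop (nhds (q.eval ℓ)) :=
      ((q.continuous_aeval).tendsto ℓ).comp hℓ
    have h0 : Filter.Tendsto (fun k => q.eval (f k)) Filter.atTop (nhds 0) := by
      rw [tendsto_zero_iff_norm_tendsto_zero]
      refine squeeze_zero (g := fun k => D * (2:ℝ)⁻¹ ^ k) (fun k => norm_nonneg _)
        (fun k => ?_) ?_
      · have h1 := (hGood k).2.1
        by_cases hk : k = 0
        · subst hk
          simp only [if_pos rfl] at h1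
          simpa using h1
        · rw [if_neg hk] at h1
          refine le_trans h1 ?_
          have h2 : (2:ℝ)⁻¹ ^ (n * k) ≤ (2:ℝ)⁻¹ ^ k :=
            pow_le_pow_of_le_one (le_of_lt hhalf) hhalf1 (by nlinarith [hn])
          refine le_trans h2 ?_
          nth_rewrite 1 [← one_mul ((2:ℝ)⁻¹ ^ k)]
          exact mul_le_mul_of_nonneg_right hD (le_of_lt (pow_pos hhalf k))
      · have := tendsto_pow_atTop_nhds_zero_of_lt_one (le_of_lt hhalf) (by norm_num : (2:ℝ)⁻¹ < 1)
        simpa using this.const_mul D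
    exact tendsto_nhds_unique hcont h0
  refine ⟨⟨ℓ, hmemM⟩, ?_⟩
  have h1 := eval₂_at_apply (p := p) M.subtype (⟨ℓ, hmemM⟩ : M)
  rw [← eval_map, ← hq_def] at h1
  have h2 : M.subtype (p.eval ⟨ℓ, hmemM⟩) = 0 := by
    rw [← h1]
    exact heval
  have h3 : p.eval ⟨ℓ, hmemM⟩ = 0 := by
    exact Subtype.coe_injective (by simpa using h2)
  exact h3
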